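/- arXiv:2212.06227 — 2 statements merged into one kernel-verified Lean document; each statement's English description precedes it below -/
import Mathlib

section
/- For every κ ∈ ℝ, Υ(λ) → 0 as |λ| → ∞ with λ ∈ Π_κ⁺; that is, for every δ > 0 there exists Λ > 0 such that for all λ ∈ ℂ with Re λ > −κ and |λ| > Λ, and all indices (i,j) and all s, x ∈ [0,1], one has |v_{ij}(s,x,λ)| < δ. -/
open MeasureTheory Set Filter Topology

noncomputable section

/-- `f` is absolutely continuous on `[0,1]` with integrable derivative: there is an
integrable `g` with `f x = f 0 + ∫ t in 0..x, g t` for all `x ∈ [0,1]`. -/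
def ACI {E : Type*} [NormedAddCommGroup E] [NormedSpace ℝ E] (f : ℝ → E) : Prop :=
  ∃ g : ℝ → E, IntervalIntegrable g volume 0 1 ∧
    ∀ x ∈ Set.Icc (0 : ℝ) 1, f x = f 0 + ∫ t in (0:ℝ)..x, g t

/-- The Sobolev class `W¹ₙ[0,1]`: the derivatives of order `< n` are absolutely
continuous and the `n`-th derivative is integrable; `W¹₀ = L¹[0,1]`. -/
def SobW {E : Type*} [NormedAddCommGroup E] [NormedSpace ℝ E] (n : ℕ) (f : ℝ → E) : Prop :=
  (∀ k < n, ACI (deriv^[k] f)) ∧ IntervalIntegrable (deriv^[n] f) volume 0 1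

section Helpers

/-- Complex Weierstrass with derivative data. -/
lemma weierC (f : ℝ → ℂ) (hf : Continuous f) (α β δ : ℝ) (hδ : 0 < δ) :
    ∃ P P' : ℝ → ℂ, Continuous P ∧ Continuous P' ∧ (∀ x : ℝ, HasDerivAt P (P' x) x) ∧
      ∀ x ∈ Set.Icc α β, ‖f x - P x‖ ≤ δ := by
  obtain ⟨p, hp⟩ := exists_polynomial_near_of_continuousOn α β (fun x => (f x).re)
    ((Complex.continuous_re.comp hf).continuousOn) (δ/2) (by linarith)
  obtain ⟨q, hq⟩ := exists_polynomial_near_of_continuousOn α β (fun x => (f x).im)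
    ((Complex.continuous_im.comp hf).continuousOn) (δ/2) (by linarith)
  refine ⟨fun x => Complex.ofReal (p.eval x) + Complex.ofReal (q.eval x) * Complex.I,
    fun x => Complex.ofReal (p.derivative.eval x) + Complex.ofReal (q.derivative.eval x) * Complex.I,
    (Complex.continuous_ofReal.comp p.continuous).add
      ((Complex.continuous_ofReal.comp q.continuous).mul continuous_const),
    (Complex.continuous_ofReal.comp p.derivative.continuous).add
      ((Complex.continuous_ofReal.comp q.derivative.continuous).mul continuous_const), ?_, ?_⟩
  · intro x
    exact ((p.hasDerivAt x).ofReal_comp).add (((q.hasDerivAt x).ofReal_comp).mul_const _)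
  · intro x hx
    have h1 := hp x hx
    have h2 := hq x hx
    have hre : (f x - (Complex.ofReal (p.eval x) + Complex.ofReal (q.eval x) * Complex.I)).re
        = (f x).re - p.eval x := by simp
    have him : (f x - (Complex.ofReal (p.eval x) + Complex.ofReal (q.eval x) * Complex.I)).im
        = (f x).im - q.eval x := by simp
    calc ‖f x - (Complex.ofReal (p.eval x) + Complex.ofReal (q.eval x) * Complex.I)‖
        ≤ |(f x - (Complex.ofReal (p.eval x) + Complex.ofReal (q.eval x) * Complex.I)).re|
          + |(f x - (Complex.ofReal (p.eval x) + Complex.ofReal (q.eval x) * Complex.I)).im| :=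
          Complex.norm_le_abs_re_add_abs_im _
      _ ≤ δ := by
          rw [hre, him, abs_sub_comm ((f x).re) _, abs_sub_comm ((f x).im) _]
          linarith [le_of_lt h1, le_of_lt h2]


/-- A continuous function on [0,1] growing at rate ≥ ε admits a continuous left inverse. -/
lemma inv_exists (ρ : ℝ → ℝ) (hcont : ContinuousOn ρ (Set.Icc 0 1)) (hρ0 : ρ 0 = 0)
    (ε : ℝ) (hε : 0 < ε)
    (hstr : ∀ x ∈ Set.Icc (0:ℝ) 1, ∀ y ∈ Set.Icc (0:ℝ) 1, x ≤ y → ε * (y - x) ≤ ρ y - ρ x) :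
    ∃ τ : ℝ → ℝ, Continuous τ ∧ ∀ t ∈ Set.Icc (0:ℝ) 1, τ (ρ t) = t := by
  set c : ℝ → ℝ := fun x => max 0 (min 1 x) with hc
  have hcmem : ∀ x, c x ∈ Set.Icc (0:ℝ) 1 := fun x =>
    ⟨le_max_left _ _, max_le zero_le_one (min_le_left _ _)⟩
  have hcmono : Monotone c := fun x y hxy => max_le_max le_rfl (min_le_min le_rfl hxy)
  have hccont : Continuous c := continuous_const.max (continuous_const.min continuous_id)
  set f : ℝ → ℝ := fun x => ρ (c x) + min x 0 + max (x - 1) 0 with hfdef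
  have hfc : Continuous f := by
    refine ((hcont.comp_continuous hccont hcmem).add
      (continuous_id.min continuous_const)).add ((continuous_id.sub continuous_const).max
      continuous_const)
  have hρmono : ∀ x ∈ Set.Icc (0:ℝ) 1, ∀ y ∈ Set.Icc (0:ℝ) 1, x ≤ y → ρ x ≤ ρ y := by
    intro x hx y hy hxy
    nlinarith [hstr x hx y hy hxy]
  have hfmono : StrictMono f := by
    intro x y hxy
    have b1 : ρ (c x) ≤ ρ (c y) := hρmono _ (hcmem x) _ (hcmem y) (hcmono hxy.le)
    have b2 : min x 0 ≤ min y 0 := min_le_min hxy.le le_rfl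
    have b3 : max (x - 1) 0 ≤ max (y - 1) 0 := max_le_max (by linarith) le_rfl
    rcases le_or_gt y 0 with hy0 | hy0
    · have : min x 0 < min y 0 := by
        rw [min_eq_left (hxy.le.trans hy0), min_eq_left hy0]; exact hxy
      simp only [hfdef]; linarith
    rcases le_or_gt 1 x with hx1 | hx1
    · have : max (x - 1) 0 < max (y - 1) 0 := by
        rw [max_eq_left (by linarith), max_eq_left (by linarith)]; linarith
      simp only [hfdef]; linarith
    · -- x < 1, 0 < y : clamp strictly increases
      have hcxy : c x < c y := by
        rcases le_or_gt x 0 with hx0 | hx0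
        · have h1 : c x = 0 := by
            simp only [hc]; rw [min_eq_right (hx0.trans zero_le_one), max_eq_left hx0]
          have h2 : 0 < c y := lt_max_iff.2 (Or.inr (lt_min one_pos hy0))
          rw [h1]; exact h2
        · have h1 : c x = x := by
            simp only [hc]; rw [min_eq_right hx1.le, max_eq_right hx0.le]
          have h2 : x < c y := lt_max_iff.2 (Or.inr (lt_min hx1 hxy))
          rw [h1]; exact h2
      have := hstr _ (hcmem x) _ (hcmem y) hcxy.le
      have : 0 < ρ (c y) - ρ (c x) := lt_of_lt_of_le (by nlinarith) this
      simp only [hfdef]; linarith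
  have hfbot : ∀ x ≤ (0:ℝ), f x = x := by
    intro x hx
    simp only [hfdef, hc]
    rw [min_eq_right (hx.trans zero_le_one), max_eq_left hx, hρ0,
      min_eq_left hx, max_eq_right (by linarith)]
    ring
  have hftop : ∀ x, (1:ℝ) ≤ x → f x = ρ 1 + (x - 1) := by
    intro x hx
    simp only [hfdef, hc]
    rw [min_eq_left hx, max_eq_right zero_le_one, min_eq_right (by linarith),
      max_eq_left (by linarith)]
    ring
  have hsurj : Function.Surjective f := by
    apply hfc.surjective
    · apply Tendsto.congr' _ (tendsto_atTop_add_const_left _ (ρ 1)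
        (tendsto_atTop_add_const_right _ (-1) tendsto_id))
      filter_upwards [eventually_ge_atTop (1:ℝ)] with x hx
      rw [hftop x hx]; simp; ring
    · apply Tendsto.congr' _ (tendsto_id (α := ℝ))
      filter_upwards [eventually_le_atBot (0:ℝ)] with x hx
      rw [hfbot x hx]; rfl
  set e := StrictMono.orderIsoOfSurjective f hfmono hsurj with he
  refine ⟨fun u => e.symm u, (OrderIso.toHomeomorph e.symm).continuous, ?_⟩
  intro t ht
  have hft : f t = ρ t := by
    simp only [hfdef, hc]
    rw [min_eq_right ht.2, max_eq_right ht.1, min_eq_right ht.1, max_eq_right (by linarith [ht.2] : t - 1 ≤ 0)]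
    ring
  have : e t = ρ t := by rw [← hft]; rfl
  rw [← this]
  exact e.symm_apply_apply t


lemma mono01 (f : ℝ → ℝ) (hf : IntegrableOn f (Set.Icc 0 1) volume)
    (h0 : ∀ t ∈ Set.Icc (0:ℝ) 1, 0 ≤ f t)
    (x y : ℝ) (hx : x ∈ Set.Icc (0:ℝ) 1) (hy : y ∈ Set.Icc (0:ℝ) 1) (hxy : x ≤ y) :
    (∫ t in x..y, f t) ≤ ∫ t in Set.Icc (0:ℝ) 1, f t := by
  rw [intervalIntegral.integral_of_le hxy]
  apply setIntegral_mono_set hf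
  · filter_upwards [ae_restrict_mem measurableSet_Icc] with t ht using h0 t ht
  · apply Eventually.of_forall
    intro t ht
    exact ⟨le_trans hx.1 (le_of_lt ht.1), le_trans ht.2 hy.2⟩


lemma contL1 {E : Type*} [NormedAddCommGroup E] [NormedSpace ℝ E]
    (f : ℝ → E) (hf : IntegrableOn f (Set.Icc 0 1) volume) (δ : ℝ) (hδ : 0 < δ) :
    ∃ g : ℝ → E, Continuous g ∧ (∫ t in Set.Icc (0:ℝ) 1, ‖f t - g t‖) ≤ δ := by
  set F := (Set.Icc (0:ℝ) 1).indicator f with hF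
  have hFi : Integrable F volume := by
    rw [hF, integrable_indicator_iff measurableSet_Icc]; exact hf
  obtain ⟨g, -, hg1, hg2, hg3⟩ := hFi.exists_hasCompactSupport_integral_sub_le hδ
  refine ⟨g, hg2, ?_⟩
  have h1 : (∫ t in Set.Icc (0:ℝ) 1, ‖f t - g t‖) = ∫ t in Set.Icc (0:ℝ) 1, ‖F t - g t‖ := by
    apply setIntegral_congr_fun measurableSet_Icc
    intro t ht
    simp [hF, Set.indicator_of_mem ht]
  rw [h1]
  refine le_trans (setIntegral_le_integral ((hFi.sub hg3).norm) ?_) hg1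
  exact Eventually.of_forall (fun t => norm_nonneg _)

lemma intOn_smul (w : ℝ → ℝ) (hw : IntegrableOn w (Set.Icc 0 1) volume)
    (F : ℝ → ℂ) (hF : ContinuousOn F (Set.Icc 0 1)) :
    IntegrableOn (fun t => w t • F t) (Set.Icc (0:ℝ) 1) volume := by
  have h1 : IntegrableOn (fun t => (w t : ℂ) * F t) (Set.Icc (0:ℝ) 1) volume :=
    IntegrableOn.mul_continuousOn hw.ofReal hF isCompact_Icc
  exact h1.congr_fun (fun t _ => Complex.real_smul.symm) measurableSet_Icc

/-- Change of variables with an integrable density. -/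
lemma subst (a : ℝ → ℝ) (ha : IntegrableOn a (Set.Icc 0 1) volume)
    (c d : ℝ) (hc : c ∈ Set.Icc (0:ℝ) 1) (hd : d ∈ Set.Icc (0:ℝ) 1) (hcd : c ≤ d)
    (φ : ℝ → ℂ) (hφ : Continuous φ) :
    ∫ t in c..d, a t • φ (∫ s in (0:ℝ)..t, a s)
      = ∫ u in (∫ s in (0:ℝ)..c, a s)..(∫ s in (0:ℝ)..d, a s), φ u := by
  have h01 : (0:ℝ) ≤ 1 := zero_le_one
  have haI : ∀ x ∈ Set.Icc (0:ℝ) 1, ∀ y ∈ Set.Icc (0:ℝ) 1, IntervalIntegrable a volume x y := by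
    intro x hx y hy
    exact (ha.mono_set (Set.uIcc_subset_Icc hx hy)).intervalIntegrable
  set ρ₀ : ℝ → ℝ := fun x => ∫ s in (0:ℝ)..x, a s with hρ₀
  have hρcont : ContinuousOn ρ₀ (Set.Icc 0 1) := by
    have := intervalIntegral.continuousOn_primitive_interval
      (f := a) (a := (0:ℝ)) (b := 1) (μ := volume) (by rwa [Set.uIcc_of_le h01])
    rwa [Set.uIcc_of_le h01] at this
  set L := ∫ t in c..d, a t • φ (ρ₀ t) with hL
  set R := ∫ u in (ρ₀ c)..(ρ₀ d), φ u with hR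
  show L = R
  by_contra hne
  set ζ := ‖L - R‖ with hζdef
  have hζ : 0 < ζ := by
    rw [hζdef, norm_pos_iff]
    exact sub_ne_zero.2 hne
  -- uniform bounds
  set R₀ : ℝ := (∫ t in Set.Icc (0:ℝ) 1, |a t|) + 1 with hR₀
  have hIa : 0 ≤ ∫ t in Set.Icc (0:ℝ) 1, |a t| :=
    setIntegral_nonneg measurableSet_Icc (fun t _ => abs_nonneg _)
  have hR₀1 : 1 ≤ R₀ := by rw [hR₀]; linarith
  have hR₀pos : 0 < R₀ := by linarith
  have hbd : ∀ x ∈ Set.Icc (0:ℝ) 1, |ρ₀ x| ≤ R₀ - 1 := by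
    intro x hx
    have h1 : |ρ₀ x| ≤ ∫ t in (0:ℝ)..x, |a t| := by
      simpa using intervalIntegral.abs_integral_le_integral_abs hx.1
    have h2 : (∫ t in (0:ℝ)..x, |a t|) ≤ ∫ t in Set.Icc (0:ℝ) 1, |a t| :=
      mono01 _ ha.abs (fun t _ => abs_nonneg _) 0 x (Set.left_mem_Icc.2 h01) hx hx.1
    rw [hR₀]; linarith
  set K := Set.Icc (-R₀) R₀ with hK
  have hKmem : ∀ x ∈ Set.Icc (0:ℝ) 1, ρ₀ x ∈ K := by
    intro x hx
    have := hbd x hx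
    constructor <;> [linarith [abs_le.1 this |>.1]; linarith [abs_le.1 this |>.2]]
  -- bound for φ on K
  obtain ⟨C₀, hC₀⟩ := (isCompact_Icc (a := -R₀) (b := R₀)).exists_bound_of_continuousOn
    hφ.continuousOn
  set Cφ := max C₀ 1 with hCφ
  have hCφ1 : (1:ℝ) ≤ Cφ := le_max_right _ _
  have hCφpos : (0:ℝ) < Cφ := lt_of_lt_of_le one_pos hCφ1
  have hCφb : ∀ x ∈ K, ‖φ x‖ ≤ Cφ := fun x hx => le_trans (hC₀ x hx) (le_max_left _ _)
  -- uniform continuity of φ on K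
  set ζ' := ζ / (3 * R₀) with hζ'
  have hζ'pos : 0 < ζ' := div_pos hζ (by linarith)
  have hUC : UniformContinuousOn φ K :=
    (isCompact_Icc).uniformContinuousOn_of_continuous hφ.continuousOn
  rw [Metric.uniformContinuousOn_iff_le] at hUC
  obtain ⟨η₁, hη₁pos, hη₁⟩ := hUC ζ' hζ'pos
  set η := min 1 (min η₁ (ζ / (9 * Cφ))) with hη
  have hηpos : 0 < η := lt_min one_pos (lt_min hη₁pos (div_pos hζ (by linarith)))
  have hη1 : η ≤ 1 := min_le_left _ _
  have hηη₁ : η ≤ η₁ := le_trans (min_le_right _ _) (min_le_left _ _)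
  have hηζ : η ≤ ζ / (9 * Cφ) := le_trans (min_le_right _ _) (min_le_right _ _)
  -- continuous approximation of a
  obtain ⟨aa, haac, haacl⟩ := contL1 a ha η hηpos
  have haaInt : ∀ x y : ℝ, IntervalIntegrable aa volume x y := fun x y => haac.intervalIntegrable x y
  have haaIcc : IntegrableOn aa (Set.Icc 0 1) volume := haac.integrableOn_Icc
  have habs : (∫ t in Set.Icc (0:ℝ) 1, |a t - aa t|) ≤ η := by
    refine le_trans (le_of_eq ?_) haacl
    exact setIntegral_congr_fun measurableSet_Icc (fun t _ => (Real.norm_eq_abs _).symm)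
  set rr : ℝ → ℝ := fun x => ∫ s in (0:ℝ)..x, aa s with hrr
  have hrrderiv : ∀ x : ℝ, HasDerivAt rr (aa x) x := by
    intro x
    exact intervalIntegral.integral_hasDerivAt_right (haaInt 0 x)
      (haac.stronglyMeasurableAtFilter _ _) haac.continuousAt
  have hdiff : ∀ x ∈ Set.Icc (0:ℝ) 1, |rr x - ρ₀ x| ≤ η := by
    intro x hx
    have h1 : rr x - ρ₀ x = ∫ s in (0:ℝ)..x, (aa s - a s) :=
      (intervalIntegral.integral_sub (haaInt 0 x)
        (haI 0 (Set.left_mem_Icc.2 h01) x hx)).symm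
    have h2 : |∫ s in (0:ℝ)..x, (aa s - a s)| ≤ ∫ s in (0:ℝ)..x, |aa s - a s| := by
      simpa using intervalIntegral.abs_integral_le_integral_abs hx.1
    have h3 : (∫ s in (0:ℝ)..x, |aa s - a s|) ≤ ∫ t in Set.Icc (0:ℝ) 1, |aa t - a t| :=
      mono01 _ (haaIcc.sub ha).abs (fun t _ => abs_nonneg _) 0 x
        (Set.left_mem_Icc.2 h01) hx hx.1
    have h4 : (∫ t in Set.Icc (0:ℝ) 1, |aa t - a t|) = ∫ t in Set.Icc (0:ℝ) 1, |a t - aa t| :=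
      setIntegral_congr_fun measurableSet_Icc (fun t _ => abs_sub_comm _ _)
    rw [h1]
    linarith [habs]
  have hrrK : ∀ x ∈ Set.Icc (0:ℝ) 1, rr x ∈ K := by
    intro x hx
    have h1 := hbd x hx
    have h2 := hdiff x hx
    obtain ⟨l1, r1⟩ := abs_le.1 h1
    obtain ⟨l2, r2⟩ := abs_le.1 h2
    exact ⟨by linarith [hη1], by linarith [hη1]⟩
  -- change of variables for the approximation
  have key : (∫ t in c..d, aa t • φ (rr t)) = ∫ u in (rr c)..(rr d), φ u := by
    have := intervalIntegral.integral_comp_smul_deriv (a := c) (b := d)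
      (f := rr) (f' := aa) (g := φ) (fun x _ => hrrderiv x) haac.continuousOn hφ
    simpa [Function.comp] using this
  -- interval integrability of the various integrands
  have hφρ₀ : ContinuousOn (fun t => φ (ρ₀ t)) (Set.Icc 0 1) := hφ.comp_continuousOn hρcont
  have hI1 : IntervalIntegrable (fun t => a t • φ (ρ₀ t)) volume c d :=
    ((intOn_smul a ha _ hφρ₀).mono_set (Set.uIcc_subset_Icc hc hd)).intervalIntegrable
  have hI2 : IntervalIntegrable (fun t => aa t • φ (ρ₀ t)) volume c d :=
    ((intOn_smul aa haaIcc _ hφρ₀).mono_set (Set.uIcc_subset_Icc hc hd)).intervalIntegrable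
  have hrrc : Continuous rr := by
    have : Continuous fun x : ℝ => ∫ s in (0:ℝ)..x, aa s :=
      intervalIntegral.continuous_primitive haaInt 0
    exact this
  have hI3 : IntervalIntegrable (fun t => aa t • φ (rr t)) volume c d :=
    (haac.smul (hφ.comp hrrc)).intervalIntegrable c d
  -- T1
  have hd_ab : IntegrableOn (fun t => a t - aa t) (Set.Icc 0 1) volume := ha.sub haaIcc
  have hdabs : IntegrableOn (fun t => |a t - aa t|) (Set.Icc 0 1) volume := hd_ab.abs
  have habsInt : IntegrableOn (fun t => |a t|) (Set.Icc 0 1) volume := ha.abs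
  have hI12 : IntervalIntegrable (fun t => (a t - aa t) • φ (ρ₀ t)) volume c d :=
    ((intOn_smul _ hd_ab _ hφρ₀).mono_set (Set.uIcc_subset_Icc hc hd)).intervalIntegrable
  have hI23 : IntervalIntegrable (fun t => aa t • (φ (ρ₀ t) - φ (rr t))) volume c d :=
    ((intOn_smul aa haaIcc _ (hφρ₀.sub (hφ.comp hrrc).continuousOn)).mono_set
      (Set.uIcc_subset_Icc hc hd)).intervalIntegrable
  have hsub12 : (∫ t in c..d, a t • φ (ρ₀ t)) - (∫ t in c..d, aa t • φ (ρ₀ t))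
      = ∫ t in c..d, (a t - aa t) • φ (ρ₀ t) := by
    rw [← intervalIntegral.integral_sub hI1 hI2]
    congr 1; ext t; rw [sub_smul]
  have hIaux : IntervalIntegrable (fun t => |a t - aa t|) volume c d :=
    ((hdabs).mono_set (Set.uIcc_subset_Icc hc hd)).intervalIntegrable
  have hT1 : ‖(∫ t in c..d, a t • φ (ρ₀ t)) - (∫ t in c..d, aa t • φ (ρ₀ t))‖ ≤ Cφ * η := by
    rw [hsub12]
    calc ‖∫ t in c..d, (a t - aa t) • φ (ρ₀ t)‖
        ≤ ∫ t in c..d, ‖(a t - aa t) • φ (ρ₀ t)‖ :=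
          intervalIntegral.norm_integral_le_integral_norm hcd
      _ ≤ ∫ t in c..d, |a t - aa t| * Cφ := by
          apply intervalIntegral.integral_mono_on hcd hI12.norm (hIaux.mul_const _)
          intro t ht
          have htI : t ∈ Set.Icc (0:ℝ) 1 := ⟨le_trans hc.1 ht.1, le_trans ht.2 hd.2⟩
          rw [norm_smul, Real.norm_eq_abs]
          exact mul_le_mul_of_nonneg_left (hCφb _ (hKmem t htI)) (abs_nonneg _)
      _ = (∫ t in c..d, |a t - aa t|) * Cφ := intervalIntegral.integral_mul_const _ _
      _ ≤ η * Cφ := by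
          apply mul_le_mul_of_nonneg_right _ hCφpos.le
          exact le_trans (mono01 _ hdabs (fun t _ => abs_nonneg _)
            c d hc hd hcd) habs
      _ = Cφ * η := mul_comm _ _
  -- T2
  have hsub23 : (∫ t in c..d, aa t • φ (ρ₀ t)) - (∫ t in c..d, aa t • φ (rr t))
      = ∫ t in c..d, aa t • (φ (ρ₀ t) - φ (rr t)) := by
    rw [← intervalIntegral.integral_sub hI2 hI3]
    congr 1; ext t; rw [smul_sub]
  have haaabs : IntervalIntegrable (fun t => |aa t|) volume c d := (haaInt c d).abs
  have hT2 : ‖(∫ t in c..d, aa t • φ (ρ₀ t)) - (∫ t in c..d, aa t • φ (rr t))‖ ≤ ζ' * R₀ := by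
    rw [hsub23]
    have hptw : ∀ t ∈ Set.Icc c d, ‖aa t • (φ (ρ₀ t) - φ (rr t))‖ ≤ |aa t| * ζ' := by
      intro t ht
      have htI : t ∈ Set.Icc (0:ℝ) 1 := ⟨le_trans hc.1 ht.1, le_trans ht.2 hd.2⟩
      rw [norm_smul, Real.norm_eq_abs]
      apply mul_le_mul_of_nonneg_left _ (abs_nonneg _)
      have hd1 : dist (ρ₀ t) (rr t) ≤ η₁ := by
        rw [Real.dist_eq, abs_sub_comm]
        exact le_trans (hdiff t htI) hηη₁
      have := hη₁ (ρ₀ t) (hKmem t htI) (rr t) (hrrK t htI) hd1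
      rwa [dist_eq_norm] at this
    calc ‖∫ t in c..d, aa t • (φ (ρ₀ t) - φ (rr t))‖
        ≤ ∫ t in c..d, ‖aa t • (φ (ρ₀ t) - φ (rr t))‖ :=
          intervalIntegral.norm_integral_le_integral_norm hcd
      _ ≤ ∫ t in c..d, |aa t| * ζ' :=
          intervalIntegral.integral_mono_on hcd hI23.norm (haaabs.mul_const _) hptw
      _ = (∫ t in c..d, |aa t|) * ζ' := intervalIntegral.integral_mul_const _ _
      _ ≤ R₀ * ζ' := by
          apply mul_le_mul_of_nonneg_right _ hζ'pos.le
          have hptw2 : ∀ t ∈ Set.Icc c d, |aa t| ≤ |a t| + |a t - aa t| := by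
            intro t _
            calc |aa t| = |a t - (a t - aa t)| := by ring_nf
              _ ≤ |a t| + |a t - aa t| := abs_sub _ _
          calc (∫ t in c..d, |aa t|) ≤ ∫ t in c..d, (|a t| + |a t - aa t|) := by
                apply intervalIntegral.integral_mono_on hcd haaabs _ hptw2
                have hsum : IntegrableOn (fun t => |a t| + |a t - aa t|)
                    (Set.Icc 0 1) volume := habsInt.add hdabs
                exact ((hsum.mono_set (Set.uIcc_subset_Icc hc hd)).intervalIntegrable)
            _ = (∫ t in c..d, |a t|) + ∫ t in c..d, |a t - aa t| :=
                intervalIntegral.integral_add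
                  ((habsInt.mono_set (Set.uIcc_subset_Icc hc hd)).intervalIntegrable)
                  ((hdabs.mono_set (Set.uIcc_subset_Icc hc hd)).intervalIntegrable)
            _ ≤ (R₀ - 1) + η := by
                have b1 : (∫ t in c..d, |a t|) ≤ ∫ t in Set.Icc (0:ℝ) 1, |a t| :=
                  mono01 _ habsInt (fun t _ => abs_nonneg _) c d hc hd hcd
                have b2 : (∫ t in c..d, |a t - aa t|) ≤ η :=
                  le_trans (mono01 _ hdabs (fun t _ => abs_nonneg _) c d hc hd hcd) habs
                have b3 : (∫ t in Set.Icc (0:ℝ) 1, |a t|) = R₀ - 1 := by rw [hR₀]; ring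
                linarith
            _ ≤ R₀ := by linarith [hη1]
      _ = ζ' * R₀ := mul_comm _ _
  -- T3
  have hφI : ∀ x y : ℝ, IntervalIntegrable φ volume x y := fun x y => hφ.intervalIntegrable x y
  have hsplit : (∫ u in (rr c)..(rr d), φ u)
      = (∫ u in (rr c)..(ρ₀ c), φ u) + (∫ u in (ρ₀ c)..(ρ₀ d), φ u)
        + ∫ u in (ρ₀ d)..(rr d), φ u := by
    rw [intervalIntegral.integral_add_adjacent_intervals (hφI _ _) (hφI _ _),
      intervalIntegral.integral_add_adjacent_intervals (hφI _ _) (hφI _ _)]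
  have hedge : ∀ x y : ℝ, x ∈ K → y ∈ K → |y - x| ≤ η → ‖∫ u in x..y, φ u‖ ≤ Cφ * η := by
    intro x y hx hy hxy
    have h1 : ‖∫ u in x..y, φ u‖ ≤ Cφ * |y - x| := by
      apply intervalIntegral.norm_integral_le_of_norm_le_const
      intro u hu
      apply hCφb
      have : u ∈ Set.uIcc x y := Set.Ioc_subset_Icc_self hu
      exact Set.uIcc_subset_Icc hx hy this
    exact le_trans h1 (mul_le_mul_of_nonneg_left hxy hCφpos.le)
  have hT3 : ‖(∫ u in (rr c)..(rr d), φ u) - R‖ ≤ Cφ * η + Cφ * η := by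
    have e1 : (∫ u in (rr c)..(rr d), φ u) - R
        = (∫ u in (rr c)..(ρ₀ c), φ u) + ∫ u in (ρ₀ d)..(rr d), φ u := by
      rw [hsplit, hR]; ring
    rw [e1]
    refine le_trans (norm_add_le _ _) (add_le_add ?_ ?_)
    · apply hedge _ _ (hrrK c hc) (hKmem c hc)
      rw [abs_sub_comm]
      exact hdiff c hc
    · exact hedge _ _ (hKmem d hd) (hrrK d hd) (hdiff d hd)
  -- conclusion
  have hfinal : ζ ≤ Cφ * η + ζ' * R₀ + (Cφ * η + Cφ * η) := by
    have e2 : L - R = ((∫ t in c..d, a t • φ (ρ₀ t)) - (∫ t in c..d, aa t • φ (ρ₀ t)))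
        + ((∫ t in c..d, aa t • φ (ρ₀ t)) - (∫ t in c..d, aa t • φ (rr t)))
        + ((∫ u in (rr c)..(rr d), φ u) - R) := by
      rw [key, hL]; ring
    calc ζ = ‖L - R‖ := rfl
      _ ≤ _ := by
          rw [e2]
          exact le_trans (norm_add_le _ _) (add_le_add (norm_add_le _ _) (le_refl _))
      _ ≤ _ := add_le_add (add_le_add hT1 hT2) hT3
  have hζ'R : ζ' * R₀ = ζ / 3 := by
    rw [hζ']; field_simp
  have hCφη : Cφ * η ≤ ζ / 9 := by
    calc Cφ * η ≤ Cφ * (ζ / (9 * Cφ)) := mul_le_mul_of_nonneg_left hηζ hCφpos.le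
      _ = ζ / 9 := by field_simp
  rw [hζ'R] at hfinal
  have hcontr : ζ ≤ ζ / 9 + ζ / 3 + (ζ / 9 + ζ / 9) := by linarith [hfinal, hCφη]
  linarith [hcontr, hζ]




lemma master (a : ℝ → ℝ) (ha : IntegrableOn a (Set.Icc 0 1) volume)
    (ε : ℝ) (hε : 0 < ε) (hεa : ∀ x ∈ Set.Icc (0:ℝ) 1, ε ≤ a x)
    (ρ : ℝ → ℝ) (hρ : ∀ x ∈ Set.Icc (0:ℝ) 1, ρ x = ∫ t in (0:ℝ)..x, a t)
    (q : ℝ → ℂ) (hq : IntegrableOn q (Set.Icc 0 1) volume)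
    (κ μ : ℝ) (hμ : μ = 1 ∨ μ = -1) (δ : ℝ) (hδ : 0 < δ) :
    ∃ Λ > (0:ℝ), ∀ l : ℂ, -κ < l.re → Λ < ‖l‖ →
      ∀ γ ∈ Set.Icc (0:ℝ) 1, ∀ c ∈ Set.Icc (0:ℝ) 1, ∀ d ∈ Set.Icc (0:ℝ) 1, c ≤ d →
      ((μ = 1 ∧ d ≤ γ) ∨ (μ = -1 ∧ γ ≤ c)) →
      ‖∫ t in c..d, q t * Complex.exp (l * ((μ * (ρ t - ρ γ) : ℝ) : ℂ))‖ < δ := by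
  have h01 : (0:ℝ) ≤ 1 := zero_le_one
  have h0m : (0:ℝ) ∈ Set.Icc (0:ℝ) 1 := Set.left_mem_Icc.2 h01
  have h1m : (1:ℝ) ∈ Set.Icc (0:ℝ) 1 := Set.right_mem_Icc.2 h01
  have haI : ∀ x ∈ Set.Icc (0:ℝ) 1, ∀ y ∈ Set.Icc (0:ℝ) 1, IntervalIntegrable a volume x y := by
    intro x hx y hy
    exact (ha.mono_set (Set.uIcc_subset_Icc hx hy)).intervalIntegrable
  have hsub : ∀ x ∈ Set.Icc (0:ℝ) 1, ∀ y ∈ Set.Icc (0:ℝ) 1,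
      ρ y - ρ x = ∫ t in x..y, a t := by
    intro x hx y hy
    rw [hρ x hx, hρ y hy]
    exact intervalIntegral.integral_interval_sub_left (haI 0 h0m y hy) (haI 0 h0m x hx)
  have hgrow : ∀ x ∈ Set.Icc (0:ℝ) 1, ∀ y ∈ Set.Icc (0:ℝ) 1, x ≤ y →
      ε * (y - x) ≤ ρ y - ρ x := by
    intro x hx y hy hxy
    rw [hsub x hx y hy]
    have h1 : (∫ t in x..y, (ε:ℝ)) ≤ ∫ t in x..y, a t := by
      apply intervalIntegral.integral_mono_on hxy intervalIntegrable_const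
        ((ha.mono_set (Set.uIcc_subset_Icc hx hy)).intervalIntegrable)
      intro t ht
      exact hεa t ⟨le_trans hx.1 ht.1, le_trans ht.2 hy.2⟩
    simpa [intervalIntegral.integral_const, smul_eq_mul, mul_comm] using h1
  have hmono : ∀ x ∈ Set.Icc (0:ℝ) 1, ∀ y ∈ Set.Icc (0:ℝ) 1, x ≤ y → ρ x ≤ ρ y := by
    intro x hx y hy hxy
    nlinarith [hgrow x hx y hy hxy]
  have hρ0 : ρ 0 = 0 := by rw [hρ 0 h0m]; simp
  set M := ρ 1 with hM
  have hMpos : 0 < M := by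
    have := hgrow 0 h0m 1 h1m h01
    rw [hρ0] at this; nlinarith
  have hρmem : ∀ t ∈ Set.Icc (0:ℝ) 1, ρ t ∈ Set.Icc 0 M := by
    intro t ht
    constructor
    · have := hmono 0 h0m t ht ht.1; rwa [hρ0] at this
    · exact hmono t ht 1 h1m ht.2
  have hρcont : ContinuousOn ρ (Set.Icc 0 1) := by
    have h1 : ContinuousOn (fun x => ∫ t in (0:ℝ)..x, a t) (Set.Icc 0 1) := by
      have := intervalIntegral.continuousOn_primitive_interval
        (f := a) (a := (0:ℝ)) (b := 1) (μ := volume) (by rwa [Set.uIcc_of_le h01])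
      rwa [Set.uIcc_of_le h01] at this
    exact h1.congr hρ
  set κ' := Real.exp (max κ 0 * M) with hκ'
  have hκ'pos : 0 < κ' := Real.exp_pos _
  -- real part bound
  have hre : ∀ l : ℂ, -κ < l.re → ∀ r : ℝ, -M ≤ r → r ≤ 0 → l.re * r ≤ max κ 0 * M := by
    intro l hl r hr1 hr2
    rcases le_or_gt 0 l.re with h | h
    · have h1 : l.re * r ≤ 0 := mul_nonpos_of_nonneg_of_nonpos h hr2
      have h2 : 0 ≤ max κ 0 * M := mul_nonneg (le_max_right _ _) hMpos.le
      linarith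
    · have hκpos : 0 < κ := by nlinarith
      have : l.re * r ≤ κ * M := by nlinarith
      have h2 : κ * M ≤ max κ 0 * M := mul_le_mul_of_nonneg_right (le_max_left _ _) hMpos.le
      linarith
  have hnormexp : ∀ l : ℂ, -κ < l.re → ∀ r : ℝ, -M ≤ r → r ≤ 0 →
      ‖Complex.exp (l * (r:ℂ))‖ ≤ κ' := by
    intro l hl r hr1 hr2
    rw [Complex.norm_exp]
    apply Real.exp_le_exp.2
    have : (l * (r:ℂ)).re = l.re * r := by simp
    rw [this]
    exact hre l hl r hr1 hr2
  -- approximation chain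
  set δ' := δ / (2 * κ') with hδ'
  have hδ'pos : 0 < δ' := div_pos hδ (by linarith)
  obtain ⟨g₀, hg₀c, hg₀cl⟩ := contL1 q hq (δ'/3) (by linarith)
  obtain ⟨C₀', hC₀'⟩ := (isCompact_Icc (a := (0:ℝ)) (b := 1)).exists_bound_of_continuousOn
    hg₀c.continuousOn
  set C₀ := max C₀' 1 with hC₀
  have hC₀pos : (0:ℝ) < C₀ := lt_of_lt_of_le one_pos (le_max_right _ _)
  have hC₀b : ∀ t ∈ Set.Icc (0:ℝ) 1, ‖g₀ t‖ ≤ C₀ := fun t ht =>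
    le_trans (hC₀' t ht) (le_max_left _ _)
  obtain ⟨a₁, ha₁c, ha₁cl⟩ := contL1 a ha (δ' * ε / (3 * C₀))
    (by positivity)
  set a₂ : ℝ → ℝ := fun t => max (a₁ t) ε with ha₂
  have ha₂c : Continuous a₂ := ha₁c.max continuous_const
  have ha₂pos : ∀ t, 0 < a₂ t := fun t => lt_of_lt_of_le hε (le_max_right _ _)
  have ha₂ε : ∀ t, ε ≤ a₂ t := fun t => le_max_right _ _
  set ψ : ℝ → ℂ := fun t => (a₂ t)⁻¹ • g₀ t with hψ
  have hψc : Continuous ψ := (ha₂c.inv₀ (fun t => (ha₂pos t).ne')).smul hg₀c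
  have hψbd : ∀ t ∈ Set.Icc (0:ℝ) 1, ‖ψ t‖ ≤ C₀ / ε := by
    intro t ht
    rw [hψ]
    simp only [norm_smul, norm_inv, Real.norm_eq_abs, abs_of_pos (ha₂pos t)]
    rw [div_eq_inv_mul]
    apply mul_le_mul _ (hC₀b t ht) (norm_nonneg _) (by positivity)
    exact inv_anti₀ hε (ha₂ε t)
  obtain ⟨τ, hτc, hτinv⟩ := inv_exists ρ hρcont hρ0 ε hε hgrow
  set G : ℝ → ℂ := fun u => ψ (τ u) with hG
  have hGc : Continuous G := hψc.comp hτc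
  obtain ⟨P, P', hPc, hP'c, hPd, hPapprox⟩ := weierC G hGc 0 M (δ' / (3 * M))
    (by positivity)
  obtain ⟨CP₀, hCP₀⟩ := (isCompact_Icc (a := (0:ℝ)) (b := M)).exists_bound_of_continuousOn
    hPc.continuousOn
  set CP := max CP₀ 1 with hCP
  have hCPpos : (0:ℝ) < CP := lt_of_lt_of_le one_pos (le_max_right _ _)
  have hCPb : ∀ u ∈ Set.Icc (0:ℝ) M, ‖P u‖ ≤ CP := fun u hu =>
    le_trans (hCP₀ u hu) (le_max_left _ _)
  obtain ⟨CQ₀, hCQ₀⟩ := (isCompact_Icc (a := (0:ℝ)) (b := M)).exists_bound_of_continuousOn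
    hP'c.continuousOn
  set CQ := max CQ₀ 1 with hCQ
  have hCQpos : (0:ℝ) < CQ := lt_of_lt_of_le one_pos (le_max_right _ _)
  have hCQb : ∀ u ∈ Set.Icc (0:ℝ) M, ‖P' u‖ ≤ CQ := fun u hu =>
    le_trans (hCQ₀ u hu) (le_max_left _ _)
  set N := (2 * CP + M * CQ) * κ' with hN
  have hNpos : 0 < N := by positivity
  -- the L¹ approximation bound
  have hPρ : ContinuousOn (fun t => P (ρ t)) (Set.Icc 0 1) := hPc.comp_continuousOn hρcont
  have haP : IntegrableOn (fun t => a t • P (ρ t)) (Set.Icc (0:ℝ) 1) volume :=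
    intOn_smul a ha _ hPρ
  have haψ : IntegrableOn (fun t => a t • ψ t) (Set.Icc (0:ℝ) 1) volume :=
    intOn_smul a ha _ hψc.continuousOn
  have hg₀int : IntegrableOn g₀ (Set.Icc (0:ℝ) 1) volume := hg₀c.integrableOn_Icc
  have happrox : (∫ t in Set.Icc (0:ℝ) 1, ‖q t - a t • P (ρ t)‖) ≤ δ' := by
    have hptw : ∀ t ∈ Set.Icc (0:ℝ) 1, ‖q t - a t • P (ρ t)‖
        ≤ ‖q t - g₀ t‖ + (‖g₀ t - a t • ψ t‖ + ‖a t • ψ t - a t • P (ρ t)‖) := by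
      intro t _
      calc ‖q t - a t • P (ρ t)‖
          ≤ ‖q t - g₀ t‖ + ‖g₀ t - a t • P (ρ t)‖ := norm_sub_le_norm_sub_add_norm_sub _ _ _
        _ ≤ ‖q t - g₀ t‖ + (‖g₀ t - a t • ψ t‖ + ‖a t • ψ t - a t • P (ρ t)‖) := by
            gcongr
            exact norm_sub_le_norm_sub_add_norm_sub _ _ _
    have hIq : IntegrableOn (fun t => ‖q t - g₀ t‖) (Set.Icc (0:ℝ) 1) volume :=
      (hq.sub hg₀int).norm
    have hI2 : IntegrableOn (fun t => ‖g₀ t - a t • ψ t‖) (Set.Icc (0:ℝ) 1) volume :=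
      (hg₀int.sub haψ).norm
    have hI3 : IntegrableOn (fun t => ‖a t • ψ t - a t • P (ρ t)‖) (Set.Icc (0:ℝ) 1) volume :=
      (haψ.sub haP).norm
    have hb2 : ∀ t ∈ Set.Icc (0:ℝ) 1, ‖g₀ t - a t • ψ t‖ ≤ (C₀/ε) * ‖a t - a₁ t‖ := by
      intro t ht
      have hgψ : g₀ t = a₂ t • ψ t := by
        rw [hψ]; rw [smul_inv_smul₀ (ha₂pos t).ne']
      have h1 : g₀ t - a t • ψ t = (a₂ t - a t) • ψ t := by
        rw [hgψ, ← sub_smul]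
      have h2 : |a₂ t - a t| ≤ |a t - a₁ t| := by
        have haε := hεa t ht
        rcases le_or_gt ε (a₁ t) with h | h
        · have : a₂ t = a₁ t := max_eq_left h
          rw [this, abs_sub_comm]
        · have : a₂ t = ε := max_eq_right h.le
          rw [this, abs_of_nonpos (by linarith), abs_of_nonneg (by linarith)]
          linarith
      rw [h1, norm_smul, Real.norm_eq_abs, Real.norm_eq_abs]
      calc |a₂ t - a t| * ‖ψ t‖ ≤ |a t - a₁ t| * (C₀/ε) :=
            mul_le_mul h2 (hψbd t ht) (norm_nonneg _) (abs_nonneg _)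
        _ = (C₀/ε) * |a t - a₁ t| := mul_comm _ _
    have hb3 : ∀ t ∈ Set.Icc (0:ℝ) 1, ‖a t • ψ t - a t • P (ρ t)‖ ≤ (δ'/(3*M)) * a t := by
      intro t ht
      have h1 : a t • ψ t - a t • P (ρ t) = a t • (ψ t - P (ρ t)) := by rw [smul_sub]
      have h2 : ψ t = G (ρ t) := by simp only [hG]; rw [hτinv t ht]
      have h3 : ‖ψ t - P (ρ t)‖ ≤ δ'/(3*M) := by rw [h2]; exact hPapprox _ (hρmem t ht)
      rw [h1, norm_smul, Real.norm_eq_abs, abs_of_pos (lt_of_lt_of_le hε (hεa t ht))]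
      calc a t * ‖ψ t - P (ρ t)‖ ≤ a t * (δ'/(3*M)) := by
            apply mul_le_mul_of_nonneg_left h3 (by linarith [hεa t ht])
        _ = (δ'/(3*M)) * a t := mul_comm _ _
    have hIccA : (∫ t in Set.Icc (0:ℝ) 1, a t) = M := by
      have h1 := hsub 0 h0m 1 h1m
      rw [hρ0, sub_zero] at h1
      rw [MeasureTheory.integral_Icc_eq_integral_Ioc, ← intervalIntegral.integral_of_le h01]
      exact h1.symm
    calc (∫ t in Set.Icc (0:ℝ) 1, ‖q t - a t • P (ρ t)‖)
        ≤ ∫ t in Set.Icc (0:ℝ) 1,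
            (‖q t - g₀ t‖ + (‖g₀ t - a t • ψ t‖ + ‖a t • ψ t - a t • P (ρ t)‖)) :=
          setIntegral_mono_on (hq.sub haP).norm (hIq.add (hI2.add hI3)) measurableSet_Icc hptw
      _ = (∫ t in Set.Icc (0:ℝ) 1, ‖q t - g₀ t‖)
          + ((∫ t in Set.Icc (0:ℝ) 1, ‖g₀ t - a t • ψ t‖)
            + ∫ t in Set.Icc (0:ℝ) 1, ‖a t • ψ t - a t • P (ρ t)‖) := by
          have hI23 : IntegrableOn
              (fun t => ‖g₀ t - a t • ψ t‖ + ‖a t • ψ t - a t • P (ρ t)‖)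
              (Set.Icc (0:ℝ) 1) volume := hI2.add hI3
          rw [MeasureTheory.integral_add hIq hI23, MeasureTheory.integral_add hI2 hI3]
      _ ≤ δ'/3 + (δ'/3 + δ'/3) := by
          refine add_le_add hg₀cl (add_le_add ?_ ?_)
          · calc (∫ t in Set.Icc (0:ℝ) 1, ‖g₀ t - a t • ψ t‖)
                ≤ ∫ t in Set.Icc (0:ℝ) 1, (C₀/ε) * ‖a t - a₁ t‖ :=
                  setIntegral_mono_on hI2 (((ha.sub ha₁c.integrableOn_Icc).norm).const_mul _)
                    measurableSet_Icc hb2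
              _ = (C₀/ε) * ∫ t in Set.Icc (0:ℝ) 1, ‖a t - a₁ t‖ :=
                  MeasureTheory.integral_const_mul _ _
              _ ≤ (C₀/ε) * (δ' * ε / (3 * C₀)) :=
                  mul_le_mul_of_nonneg_left ha₁cl (by positivity)
              _ = δ'/3 := by field_simp
          · calc (∫ t in Set.Icc (0:ℝ) 1, ‖a t • ψ t - a t • P (ρ t)‖)
                ≤ ∫ t in Set.Icc (0:ℝ) 1, (δ'/(3*M)) * a t :=
                  setIntegral_mono_on hI3 (ha.const_mul _) measurableSet_Icc hb3
              _ = (δ'/(3*M)) * ∫ t in Set.Icc (0:ℝ) 1, a t :=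
                  MeasureTheory.integral_const_mul _ _
              _ = δ'/3 := by rw [hIccA]; field_simp
      _ = δ' := by ring
  -- choice of Λ
  refine ⟨max 1 (2 * N / δ), lt_of_lt_of_le one_pos (le_max_left _ _), ?_⟩
  intro l hlre hlΛ γ hγ c hc d hd hcd hside
  have hl1 : 1 < ‖l‖ := lt_of_le_of_lt (le_max_left _ _) hlΛ
  have hlpos : 0 < ‖l‖ := by linarith
  have hlne : l ≠ 0 := by
    intro h; rw [h] at hl1; simp at hl1; linarith
  set c₀ : ℂ := l * (μ:ℂ) with hc₀
  have hμc : ‖(μ:ℂ)‖ = 1 := by rcases hμ with h|h <;> simp [h]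
  have hc₀abs : ‖c₀‖ = ‖l‖ := by rw [hc₀, norm_mul, hμc, mul_one]
  have hc₀ne : c₀ ≠ 0 := by
    intro h; rw [h] at hc₀abs; simp at hc₀abs; rw [← hc₀abs] at hlpos; linarith
  have hρcd : ρ c ≤ ρ d := hmono c hc d hd hcd
  have hrange : ∀ r : ℝ, ρ c ≤ r → r ≤ ρ d → -M ≤ μ * (r - ρ γ) ∧ μ * (r - ρ γ) ≤ 0 := by
    intro r h1 h2
    have hγm := hρmem γ hγ
    have hcm := hρmem c hc
    have hdm := hρmem d hd
    rcases hside with ⟨hμ1, hdγ⟩ | ⟨hμ1, hγc⟩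
    · have h3 : ρ d ≤ ρ γ := hmono d hd γ hγ hdγ
      rw [hμ1, one_mul]
      exact ⟨by linarith [hγm.2, hcm.1], by linarith⟩
    · have h3 : ρ γ ≤ ρ c := hmono γ hγ c hc hγc
      rw [hμ1, neg_one_mul]
      exact ⟨by linarith [hγm.1, hdm.2], by linarith⟩
  set E : ℝ → ℂ := fun t => Complex.exp (l * (((μ * (ρ t - ρ γ) : ℝ)) : ℂ)) with hE
  have hEcont : ContinuousOn E (Set.Icc 0 1) := by
    have h1 : ContinuousOn (fun t => (((μ * (ρ t - ρ γ) : ℝ)) : ℂ)) (Set.Icc (0:ℝ) 1) :=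
      Complex.continuous_ofReal.comp_continuousOn
        (continuousOn_const.mul (hρcont.sub continuousOn_const))
    exact Complex.continuous_exp.comp_continuousOn (continuousOn_const.mul h1)
  have hEbd : ∀ t ∈ Set.Icc c d, ‖E t‖ ≤ κ' := by
    intro t ht
    have htI : t ∈ Set.Icc (0:ℝ) 1 := ⟨le_trans hc.1 ht.1, le_trans ht.2 hd.2⟩
    have hr := hrange (ρ t) (hmono c hc t htI ht.1) (hmono t htI d hd ht.2)
    exact hnormexp l hlre _ hr.1 hr.2
  -- integrability
  have hqaPE : IntegrableOn (fun t => (q t - a t • P (ρ t)) * E t) (Set.Icc (0:ℝ) 1) volume :=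
    IntegrableOn.mul_continuousOn (hq.sub haP) hEcont isCompact_Icc
  have haPE : IntegrableOn (fun t => (a t • P (ρ t)) * E t) (Set.Icc (0:ℝ) 1) volume :=
    IntegrableOn.mul_continuousOn haP hEcont isCompact_Icc
  have hqaPEi : IntervalIntegrable (fun t => (q t - a t • P (ρ t)) * E t) volume c d :=
    (hqaPE.mono_set (Set.uIcc_subset_Icc hc hd)).intervalIntegrable
  have haPEi : IntervalIntegrable (fun t => (a t • P (ρ t)) * E t) volume c d :=
    (haPE.mono_set (Set.uIcc_subset_Icc hc hd)).intervalIntegrable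
  have hsplit : (∫ t in c..d, q t * E t)
      = (∫ t in c..d, (q t - a t • P (ρ t)) * E t)
        + ∫ t in c..d, (a t • P (ρ t)) * E t := by
    rw [← intervalIntegral.integral_add hqaPEi haPEi]
    apply intervalIntegral.integral_congr
    intro t _
    ring
  -- bound for the first piece
  have hqaPnorm : IntegrableOn (fun t => ‖q t - a t • P (ρ t)‖) (Set.Icc (0:ℝ) 1) volume :=
    (hq.sub haP).norm
  have hbound1 : ‖∫ t in c..d, (q t - a t • P (ρ t)) * E t‖ ≤ δ/2 := by
    calc ‖∫ t in c..d, (q t - a t • P (ρ t)) * E t‖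
        ≤ ∫ t in c..d, ‖(q t - a t • P (ρ t)) * E t‖ :=
          intervalIntegral.norm_integral_le_integral_norm hcd
      _ ≤ ∫ t in c..d, κ' * ‖q t - a t • P (ρ t)‖ := by
          apply intervalIntegral.integral_mono_on hcd hqaPEi.norm
            (((hqaPnorm.mono_set (Set.uIcc_subset_Icc hc hd)).intervalIntegrable).const_mul _)
          intro t ht
          rw [norm_mul]
          calc ‖q t - a t • P (ρ t)‖ * ‖E t‖ ≤ ‖q t - a t • P (ρ t)‖ * κ' :=
                mul_le_mul_of_nonneg_left (hEbd t ht) (norm_nonneg _)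
            _ = κ' * ‖q t - a t • P (ρ t)‖ := mul_comm _ _
      _ = κ' * ∫ t in c..d, ‖q t - a t • P (ρ t)‖ := intervalIntegral.integral_const_mul _ _
      _ ≤ κ' * δ' := by
          apply mul_le_mul_of_nonneg_left _ hκ'pos.le
          exact le_trans (mono01 _ hqaPnorm (fun t _ => norm_nonneg _) c d hc hd hcd) happrox
      _ = δ/2 := by rw [hδ']; field_simp
  -- substitution for the second piece
  have hφc : Continuous (fun u : ℝ => P u * Complex.exp (c₀ * ((u:ℂ) - ((ρ γ : ℝ):ℂ)))) :=
    hPc.mul (Complex.continuous_exp.comp (continuous_const.mul (Complex.continuous_ofReal.sub continuous_const)))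
  have hsubst2 : (∫ t in c..d, (a t • P (ρ t)) * E t)
      = ∫ u in (ρ c)..(ρ d), P u * Complex.exp (c₀ * ((u:ℂ) - ((ρ γ : ℝ):ℂ))) := by
    have h1 : (∫ t in c..d, (a t • P (ρ t)) * E t)
        = ∫ t in c..d, a t • (fun u : ℝ => P u * Complex.exp (c₀ * ((u:ℂ) - ((ρ γ : ℝ):ℂ))))
            (∫ s in (0:ℝ)..t, a s) := by
      apply intervalIntegral.integral_congr
      intro t ht
      have htI : t ∈ Set.Icc (0:ℝ) 1 := by
        rw [Set.uIcc_of_le hcd] at ht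
        exact ⟨le_trans hc.1 ht.1, le_trans ht.2 hd.2⟩
      have hρt : (∫ s in (0:ℝ)..t, a s) = ρ t := (hρ t htI).symm
      simp only
      rw [hρt]
      simp only [hE]
      rw [smul_mul_assoc]
      congr 2
      rw [hc₀]
      push_cast
      ring
    rw [h1, subst a ha c d hc hd hcd _ hφc, ← hρ c hc, ← hρ d hd]
  -- integration by parts bound
  have hVd : ∀ u : ℝ, HasDerivAt (fun u : ℝ => Complex.exp (c₀ * ((u:ℂ) - ((ρ γ:ℝ):ℂ))) / c₀)
      (Complex.exp (c₀ * ((u:ℂ) - ((ρ γ:ℝ):ℂ)))) u := by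
    intro u
    have h1 : HasDerivAt (fun z : ℂ => c₀ * (z - ((ρ γ:ℝ):ℂ))) c₀ ((u:ℝ):ℂ) := by
      simpa using ((hasDerivAt_id ((u:ℝ):ℂ)).sub_const ((ρ γ:ℝ):ℂ)).const_mul c₀
    have h3 := (h1.cexp.div_const c₀).comp_ofReal
    simpa [mul_div_cancel_right₀ _ hc₀ne] using h3
  have hibp := intervalIntegral.integral_mul_deriv_eq_deriv_mul
    (u := P) (u' := P') (v := fun u : ℝ => Complex.exp (c₀ * ((u:ℂ) - ((ρ γ:ℝ):ℂ))) / c₀)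
    (v' := fun u : ℝ => Complex.exp (c₀ * ((u:ℂ) - ((ρ γ:ℝ):ℂ))))
    (a := ρ c) (b := ρ d) (fun x _ => hPd x) (fun x _ => hVd x)
    (hP'c.intervalIntegrable _ _)
    ((Complex.continuous_exp.comp (continuous_const.mul (Complex.continuous_ofReal.sub continuous_const))).intervalIntegrable _ _)
  have hexpb : ∀ u ∈ Set.Icc (ρ c) (ρ d), ‖Complex.exp (c₀ * ((u:ℂ) - ((ρ γ:ℝ):ℂ)))‖ ≤ κ' := by
    intro u hu
    have heq : c₀ * ((u:ℂ) - ((ρ γ:ℝ):ℂ)) = l * (((μ * (u - ρ γ)):ℝ):ℂ) := by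
      rw [hc₀]; push_cast; ring
    rw [heq]
    have hr := hrange u hu.1 hu.2
    exact hnormexp l hlre _ hr.1 hr.2
  have hVb : ∀ u ∈ Set.Icc (ρ c) (ρ d),
      ‖Complex.exp (c₀ * ((u:ℂ) - ((ρ γ:ℝ):ℂ))) / c₀‖ ≤ κ' / ‖l‖ := by
    intro u hu
    rw [norm_div, hc₀abs]
    exact (div_le_div_iff_of_pos_right hlpos).2 (hexpb u hu)
  have hρc0M : ρ c ∈ Set.Icc (0:ℝ) M := hρmem c hc
  have hρd0M : ρ d ∈ Set.Icc (0:ℝ) M := hρmem d hd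
  have hbound2 : ‖∫ u in (ρ c)..(ρ d), P u * Complex.exp (c₀ * ((u:ℂ) - ((ρ γ:ℝ):ℂ)))‖
      ≤ N / ‖l‖ := by
    rw [hibp]
    have hmemd : ρ d ∈ Set.Icc (ρ c) (ρ d) := Set.right_mem_Icc.2 hρcd
    have hmemc : ρ c ∈ Set.Icc (ρ c) (ρ d) := Set.left_mem_Icc.2 hρcd
    have ht1 : ‖P (ρ d) * (Complex.exp (c₀ * (((ρ d):ℂ) - ((ρ γ:ℝ):ℂ))) / c₀)‖
        ≤ CP * (κ' / ‖l‖) := by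
      rw [norm_mul]
      exact mul_le_mul (hCPb _ hρd0M) (hVb _ hmemd) (norm_nonneg _) hCPpos.le
    have ht2 : ‖P (ρ c) * (Complex.exp (c₀ * (((ρ c):ℂ) - ((ρ γ:ℝ):ℂ))) / c₀)‖
        ≤ CP * (κ' / ‖l‖) := by
      rw [norm_mul]
      exact mul_le_mul (hCPb _ hρc0M) (hVb _ hmemc) (norm_nonneg _) hCPpos.le
    have ht3 : ‖∫ u in (ρ c)..(ρ d),
        P' u * (Complex.exp (c₀ * ((u:ℂ) - ((ρ γ:ℝ):ℂ))) / c₀)‖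
        ≤ CQ * (κ' / ‖l‖) * M := by
      have hb : ∀ u ∈ Set.uIoc (ρ c) (ρ d),
          ‖P' u * (Complex.exp (c₀ * ((u:ℂ) - ((ρ γ:ℝ):ℂ))) / c₀)‖
          ≤ CQ * (κ' / ‖l‖) := by
        intro u hu
        rw [Set.uIoc_of_le hρcd] at hu
        have huI : u ∈ Set.Icc (ρ c) (ρ d) := ⟨hu.1.le, hu.2⟩
        have hu0M : u ∈ Set.Icc (0:ℝ) M := ⟨le_trans hρc0M.1 huI.1, le_trans huI.2 hρd0M.2⟩
        rw [norm_mul]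
        exact mul_le_mul (hCQb _ hu0M) (hVb _ huI) (norm_nonneg _) hCQpos.le
      have := intervalIntegral.norm_integral_le_of_norm_le_const hb
      have habs : |ρ d - ρ c| ≤ M := by
        rw [abs_of_nonneg (sub_nonneg.2 hρcd)]
        linarith [hρc0M.1, hρd0M.2]
      calc ‖∫ u in (ρ c)..(ρ d),
            P' u * (Complex.exp (c₀ * ((u:ℂ) - ((ρ γ:ℝ):ℂ))) / c₀)‖
          ≤ CQ * (κ' / ‖l‖) * |ρ d - ρ c| := this
        _ ≤ CQ * (κ' / ‖l‖) * M := by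
            apply mul_le_mul_of_nonneg_left habs (by positivity)
    calc ‖P (ρ d) * (Complex.exp (c₀ * (((ρ d):ℂ) - ((ρ γ:ℝ):ℂ))) / c₀)
          - P (ρ c) * (Complex.exp (c₀ * (((ρ c):ℂ) - ((ρ γ:ℝ):ℂ))) / c₀)
          - ∫ u in (ρ c)..(ρ d), P' u * (Complex.exp (c₀ * ((u:ℂ) - ((ρ γ:ℝ):ℂ))) / c₀)‖
        ≤ ‖P (ρ d) * (Complex.exp (c₀ * (((ρ d):ℂ) - ((ρ γ:ℝ):ℂ))) / c₀)
          - P (ρ c) * (Complex.exp (c₀ * (((ρ c):ℂ) - ((ρ γ:ℝ):ℂ))) / c₀)‖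
          + ‖∫ u in (ρ c)..(ρ d), P' u * (Complex.exp (c₀ * ((u:ℂ) - ((ρ γ:ℝ):ℂ))) / c₀)‖ :=
          norm_sub_le _ _
      _ ≤ (CP * (κ' / ‖l‖) + CP * (κ' / ‖l‖))
          + CQ * (κ' / ‖l‖) * M :=
          add_le_add (le_trans (norm_sub_le _ _) (add_le_add ht1 ht2)) ht3
      _ = N / ‖l‖ := by
          rw [hN]; field_simp; ring
  have hNl : N / ‖l‖ < δ/2 := by
    have h2 : 2*N/δ < ‖l‖ := lt_of_le_of_lt (le_max_right _ _) hlΛ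
    rw [div_lt_iff₀ hlpos]
    rw [div_lt_iff₀ hδ] at h2
    nlinarith
  calc ‖∫ t in c..d, q t * E t‖
      ≤ ‖∫ t in c..d, (q t - a t • P (ρ t)) * E t‖
        + ‖∫ t in c..d, (a t • P (ρ t)) * E t‖ := by
        rw [hsplit]; exact norm_add_le _ _
    _ ≤ δ/2 + N / ‖l‖ := by
        refine add_le_add hbound1 ?_
        rw [hsubst2]; exact hbound2
    _ < δ/2 + δ/2 := by linarith
    _ = δ := by ring




end Helpers

theorem statement3
    (a1 a2 : ℝ → ℝ) (b11 b12 b21 b22 : ℝ → ℂ)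
    (ha1 : IntegrableOn a1 (Set.Icc 0 1) volume)
    (ha2 : IntegrableOn a2 (Set.Icc 0 1) volume)
    (hb11i : IntegrableOn b11 (Set.Icc 0 1) volume)
    (hb12i : IntegrableOn b12 (Set.Icc 0 1) volume)
    (hb21i : IntegrableOn b21 (Set.Icc 0 1) volume)
    (hb22i : IntegrableOn b22 (Set.Icc 0 1) volume)
    (ε : ℝ) (hε : 0 < ε)
    (ha1pos : ∀ x ∈ Set.Icc (0:ℝ) 1, 0 < a1 x)
    (ha2neg : ∀ x ∈ Set.Icc (0:ℝ) 1, a2 x < 0)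
    (hgap : ∀ x ∈ Set.Icc (0:ℝ) 1, ε ≤ a1 x - a2 x)
    (b : ℝ → ℂ) (hb : ∀ x, b x = Complex.exp (∫ t in (0:ℝ)..x, (b11 t - b22 t)))
    (q12 q21 : ℝ → ℂ)
    (hq12 : ∀ x, q12 x = b12 x * (b x)⁻¹)
    (hq21 : ∀ x, q21 x = b21 x * b x)
    (ρ : ℝ → ℝ) (hρ : ∀ x, ρ x = ∫ t in (0:ℝ)..x, (a1 t - a2 t))
    (v11 v12 v21 v22 : ℝ → ℝ → ℂ → ℂ)
    (hv11 : ∀ s x l, v11 s x l =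
      -∫ t in (max x s)..1, q12 t * Complex.exp (-(l * Complex.ofReal (ρ t - ρ s))))
    (hv12 : ∀ s x l, v12 s x l =
      -∫ t in (max x s)..1, q12 t * Complex.exp (l * Complex.ofReal (ρ x - ρ t)))
    (hv21 : ∀ s x l, v21 s x l =
      -∫ t in (0:ℝ)..(min x s), q21 t * Complex.exp (-(l * Complex.ofReal (ρ x - ρ t))))
    (hv22 : ∀ s x l, v22 s x l =
      -∫ t in (0:ℝ)..(min x s), q21 t * Complex.exp (l * Complex.ofReal (ρ t - ρ s)))
    (κ : ℝ) :
    ∀ δ > (0:ℝ), ∃ Λ > (0:ℝ), ∀ l : ℂ, -κ < l.re → Λ < ‖l‖ →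
      ∀ s ∈ Set.Icc (0:ℝ) 1, ∀ x ∈ Set.Icc (0:ℝ) 1,
        ‖v11 s x l‖ < δ ∧ ‖v12 s x l‖ < δ ∧
        ‖v21 s x l‖ < δ ∧ ‖v22 s x l‖ < δ := by
  intro δ hδ
  have h01 : (0:ℝ) ≤ 1 := zero_le_one
  have h0m : (0:ℝ) ∈ Set.Icc (0:ℝ) 1 := Set.left_mem_Icc.2 h01
  have h1m : (1:ℝ) ∈ Set.Icc (0:ℝ) 1 := Set.right_mem_Icc.2 h01
  set a : ℝ → ℝ := fun t => a1 t - a2 t with ha_def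
  have ha : IntegrableOn a (Set.Icc 0 1) volume := ha1.sub ha2
  have hεa : ∀ x ∈ Set.Icc (0:ℝ) 1, ε ≤ a x := hgap
  have hρ' : ∀ x ∈ Set.Icc (0:ℝ) 1, ρ x = ∫ t in (0:ℝ)..x, a t := fun x _ => hρ x
  -- integrability of q12 and q21
  have hBint : IntegrableOn (fun t => b11 t - b22 t) (Set.uIcc (0:ℝ) 1) volume := by
    rw [Set.uIcc_of_le h01]; exact hb11i.sub hb22i
  have hBcont : ContinuousOn (fun x => ∫ t in (0:ℝ)..x, (b11 t - b22 t)) (Set.Icc 0 1) := by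
    have := intervalIntegral.continuousOn_primitive_interval (μ := volume) hBint
    rwa [Set.uIcc_of_le h01] at this
  have hbc : ContinuousOn b (Set.Icc 0 1) :=
    (Complex.continuous_exp.comp_continuousOn hBcont).congr (fun x _ => hb x)
  have hbne : ∀ x, b x ≠ 0 := fun x => by rw [hb x]; exact Complex.exp_ne_zero _
  have hbinvc : ContinuousOn (fun x => (b x)⁻¹) (Set.Icc 0 1) :=
    hbc.inv₀ (fun x _ => hbne x)
  have hq12int : IntegrableOn q12 (Set.Icc 0 1) volume := by
    have h1 : IntegrableOn (fun x => b12 x * (b x)⁻¹) (Set.Icc 0 1) volume :=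
      IntegrableOn.mul_continuousOn hb12i hbinvc isCompact_Icc
    exact h1.congr_fun (fun x _ => (hq12 x).symm) measurableSet_Icc
  have hq21int : IntegrableOn q21 (Set.Icc 0 1) volume := by
    have h1 : IntegrableOn (fun x => b21 x * b x) (Set.Icc 0 1) volume :=
      IntegrableOn.mul_continuousOn hb21i hbc isCompact_Icc
    exact h1.congr_fun (fun x _ => (hq21 x).symm) measurableSet_Icc
  obtain ⟨Λ₁, hΛ₁pos, hΛ₁⟩ := master a ha ε hε hεa ρ hρ' q12 hq12int κ (-1) (Or.inr rfl) δ hδ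
  obtain ⟨Λ₂, hΛ₂pos, hΛ₂⟩ := master a ha ε hε hεa ρ hρ' q21 hq21int κ 1 (Or.inl rfl) δ hδ
  refine ⟨max Λ₁ Λ₂, lt_of_lt_of_le hΛ₁pos (le_max_left _ _), ?_⟩
  intro l hlre hlΛ s hs x hx
  have hl₁ : Λ₁ < ‖l‖ := lt_of_le_of_lt (le_max_left _ _) hlΛ
  have hl₂ : Λ₂ < ‖l‖ := lt_of_le_of_lt (le_max_right _ _) hlΛ
  have hmaxm : max x s ∈ Set.Icc (0:ℝ) 1 := ⟨le_trans hx.1 (le_max_left _ _),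
    max_le hx.2 hs.2⟩
  have hminm : min x s ∈ Set.Icc (0:ℝ) 1 := ⟨le_min hx.1 hs.1,
    le_trans (min_le_left _ _) hx.2⟩
  refine ⟨?_, ?_, ?_, ?_⟩
  · -- v11 : q12, μ = -1, γ = s, c = max x s, d = 1
    rw [hv11 s x l, norm_neg]
    have heq : (∫ t in (max x s)..1, q12 t * Complex.exp (-(l * Complex.ofReal (ρ t - ρ s))))
        = ∫ t in (max x s)..1, q12 t * Complex.exp (l * (((-1) * (ρ t - ρ s) : ℝ) : ℂ)) := by
      apply intervalIntegral.integral_congr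
      intro t _
      congr 1
      push_cast
      ring
    rw [heq]
    exact hΛ₁ l hlre hl₁ s hs (max x s) hmaxm 1 h1m hmaxm.2
      (Or.inr ⟨rfl, le_max_right x s⟩)
  · -- v12 : q12, μ = -1, γ = x
    rw [hv12 s x l, norm_neg]
    have heq : (∫ t in (max x s)..1, q12 t * Complex.exp (l * Complex.ofReal (ρ x - ρ t)))
        = ∫ t in (max x s)..1, q12 t * Complex.exp (l * (((-1) * (ρ t - ρ x) : ℝ) : ℂ)) := by
      apply intervalIntegral.integral_congr
      intro t _
      congr 1
      push_cast
      ring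
    rw [heq]
    exact hΛ₁ l hlre hl₁ x hx (max x s) hmaxm 1 h1m hmaxm.2
      (Or.inr ⟨rfl, le_max_left x s⟩)
  · -- v21 : q21, μ = 1, γ = x, c = 0, d = min x s
    rw [hv21 s x l, norm_neg]
    have heq : (∫ t in (0:ℝ)..(min x s), q21 t * Complex.exp (-(l * Complex.ofReal (ρ x - ρ t))))
        = ∫ t in (0:ℝ)..(min x s), q21 t * Complex.exp (l * (((1:ℝ) * (ρ t - ρ x) : ℝ) : ℂ)) := by
      apply intervalIntegral.integral_congr
      intro t _
      congr 1
      push_cast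
      ring
    rw [heq]
    exact hΛ₂ l hlre hl₂ x hx 0 h0m (min x s) hminm hminm.1
      (Or.inl ⟨rfl, min_le_left x s⟩)
  · -- v22 : q21, μ = 1, γ = s
    rw [hv22 s x l, norm_neg]
    have heq : (∫ t in (0:ℝ)..(min x s), q21 t * Complex.exp (l * Complex.ofReal (ρ t - ρ s)))
        = ∫ t in (0:ℝ)..(min x s), q21 t * Complex.exp (l * (((1:ℝ) * (ρ t - ρ s) : ℝ) : ℂ)) := by
      apply intervalIntegral.integral_congr
      intro t _
      congr 1
      push_cast
      ring
    rw [heq]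
    exact hΛ₂ l hlre hl₂ s hs 0 h0m (min x s) hminm hminm.1
      (Or.inl ⟨rfl, min_le_right x s⟩)
end
end

section
/- Let L > 0, κ ∈ ℝ, and f ∈ L¹([0,L], ℂ). Then sup{ |∫_c^L f(ξ) e^{−λ(ξ−s)} dξ| : 0 ≤ s ≤ c ≤ L } → 0 as |λ| → ∞ with λ ranging over the half-plane {λ ∈ ℂ : Re λ ≥ −κ}. -/
open MeasureTheory Set Filter Topology

noncomputable section

set_option maxHeartbeats 1000000 in
theorem statement6 (L : ℝ) (hL : 0 < L) (κ : ℝ) (f : ℝ → ℂ)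
    (hf : IntegrableOn f (Set.Icc 0 L) volume) :
    ∀ δ > (0:ℝ), ∃ Λ : ℝ, ∀ l : ℂ, -κ ≤ l.re → Λ < ‖l‖ →
      ∀ s c : ℝ, 0 ≤ s → s ≤ c → c ≤ L →
        ‖∫ ξ in c..L, f ξ * Complex.exp (-(l * Complex.ofReal (ξ - s)))‖ < δ := by
  intro δ hδ
  set M : ℝ := Real.exp (|κ| * L) with hMdef
  have hM0 : 0 < M := Real.exp_pos _
  set f₀ : ℝ → ℂ := (Set.Icc 0 L).indicator f with hf₀def
  have hf₀ : Integrable f₀ volume := hf.integrable_indicator measurableSet_Icc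
  obtain ⟨g, g_supp, hg_close, g_cont, g_int⟩ :=
    hf₀.exists_hasCompactSupport_integral_sub_le (ε := δ / (4 * M)) (by positivity)
  set ε₂ : ℝ := δ / (8 * M * (L + 1)) with hε₂def
  have hε₂0 : 0 < ε₂ := by positivity
  obtain ⟨p, hp⟩ := exists_polynomial_near_of_continuousOn 0 L (fun x => (g x).re)
    (Complex.continuous_re.comp g_cont).continuousOn ε₂ hε₂0
  obtain ⟨q, hq⟩ := exists_polynomial_near_of_continuousOn 0 L (fun x => (g x).im)
    (Complex.continuous_im.comp g_cont).continuousOn ε₂ hε₂0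
  set P : ℝ → ℂ := fun x => ((p.eval x : ℝ) : ℂ) + ((q.eval x : ℝ) : ℂ) * Complex.I with hPdef
  set P' : ℝ → ℂ :=
    fun x => ((p.derivative.eval x : ℝ) : ℂ) + ((q.derivative.eval x : ℝ) : ℂ) * Complex.I with hP'def
  have hPderiv : ∀ x : ℝ, HasDerivAt P (P' x) x := fun x =>
    ((p.hasDerivAt x).ofReal_comp).add (((q.hasDerivAt x).ofReal_comp).mul_const Complex.I)
  have hPcont : Continuous P :=
    (Complex.continuous_ofReal.comp p.continuous).add
      ((Complex.continuous_ofReal.comp q.continuous).mul continuous_const)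
  have hP'cont : Continuous P' :=
    (Complex.continuous_ofReal.comp p.derivative.continuous).add
      ((Complex.continuous_ofReal.comp q.derivative.continuous).mul continuous_const)
  obtain ⟨B, hB⟩ := isCompact_Icc.exists_bound_of_continuousOn
    (s := Set.Icc (0:ℝ) L) hPcont.continuousOn
  obtain ⟨B', hB'⟩ := isCompact_Icc.exists_bound_of_continuousOn
    (s := Set.Icc (0:ℝ) L) hP'cont.continuousOn
  have hB0 : 0 ≤ B := le_trans (norm_nonneg _) (hB 0 ⟨le_refl 0, hL.le⟩)
  have hB'0 : 0 ≤ B' := le_trans (norm_nonneg _) (hB' 0 ⟨le_refl 0, hL.le⟩)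
  refine ⟨max 1 (4 * M * (2 * B + B' * L) / δ), fun l hlre hlabs s c hs hsc hcL => ?_⟩
  have hl1 : 1 < ‖l‖ := lt_of_le_of_lt (le_max_left _ _) hlabs
  have hl0 : l ≠ 0 := by
    intro h; rw [h] at hl1; simp at hl1; linarith
  have habs0 : 0 < ‖l‖ := by linarith
  have hc0 : 0 ≤ c := le_trans hs hsc
  set e : ℝ → ℂ := fun x => Complex.exp (-(l * Complex.ofReal (x - s))) with hedef
  have hecont : Continuous e := by
    apply Complex.continuous_exp.comp
    exact (continuous_const.mul (Complex.continuous_ofReal.comp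
      (continuous_id.sub continuous_const))).neg
  have hebound : ∀ x ∈ Set.Icc c L, ‖e x‖ ≤ M := by
    intro x hx
    have hre : (-(l * Complex.ofReal (x - s))).re = -(l.re * (x - s)) := by
      simp [Complex.mul_re]
    have h1 : ‖e x‖ = Real.exp (-(l.re * (x - s))) := by
      rw [hedef]; rw [Complex.norm_exp, hre]
    rw [h1, hMdef]
    apply Real.exp_le_exp.2
    have hxs0 : 0 ≤ x - s := by linarith [hx.1]
    have hxsL : x - s ≤ L := by linarith [hx.2]
    have hk : -l.re ≤ |κ| := le_trans (by linarith) (le_abs_self κ)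
    nlinarith [abs_nonneg κ]
  -- integrability pieces
  have hfIcc : IntegrableOn f (Set.Icc c L) volume :=
    hf.mono_set (Set.Icc_subset_Icc hc0 le_rfl)
  have i1 : IntervalIntegrable (fun ξ => (f ξ - g ξ) * e ξ) volume c L := by
    have h : IntegrableOn (fun ξ => (f ξ - g ξ) * e ξ) (Set.Icc c L) volume :=
      MeasureTheory.IntegrableOn.mul_continuousOn
        (hfIcc.sub g_int.integrableOn) hecont.continuousOn isCompact_Icc
    rw [← Set.uIcc_of_le hcL] at h
    exact h.intervalIntegrable
  have i2 : IntervalIntegrable (fun ξ => (g ξ - P ξ) * e ξ) volume c L :=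
    (((g_cont.sub hPcont)).mul hecont).intervalIntegrable c L
  have i3 : IntervalIntegrable (fun ξ => P ξ * e ξ) volume c L :=
    (hPcont.mul hecont).intervalIntegrable c L
  have hsplit : (∫ ξ in c..L, f ξ * e ξ)
      = (∫ ξ in c..L, (f ξ - g ξ) * e ξ) + ((∫ ξ in c..L, (g ξ - P ξ) * e ξ)
        + (∫ ξ in c..L, P ξ * e ξ)) := by
    rw [← intervalIntegral.integral_add i2 i3, ← intervalIntegral.integral_add i1 (i2.add i3)]
    congr 1; funext ξ; ring
  -- Term 1
  have T1 : ‖∫ ξ in c..L, (f ξ - g ξ) * e ξ‖ ≤ δ / 4 := by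
    rw [intervalIntegral.integral_of_le hcL]
    calc ‖∫ x in Set.Ioc c L, (f x - g x) * e x‖
        ≤ ∫ x in Set.Ioc c L, ‖(f x - g x) * e x‖ := norm_integral_le_integral_norm _
      _ ≤ ∫ x in Set.Ioc c L, M * ‖f₀ x - g x‖ := by
          apply integral_mono_of_nonneg
          · exact ae_of_all _ fun x => norm_nonneg _
          · exact ((hf₀.sub g_int).norm.const_mul M).restrict
          · refine (ae_restrict_iff' measurableSet_Ioc).2 (ae_of_all _ fun x hx => ?_)
            show ‖(f x - g x) * e x‖ ≤ M * ‖f₀ x - g x‖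
            have hxmem : x ∈ Set.Icc (0:ℝ) L := ⟨by linarith [hx.1], hx.2⟩
            have hfx : f₀ x = f x := Set.indicator_of_mem hxmem f
            rw [norm_mul, hfx]
            calc ‖f x - g x‖ * ‖e x‖ ≤ ‖f x - g x‖ * M := by
                  apply mul_le_mul_of_nonneg_left _ (norm_nonneg _)
                  exact hebound x ⟨hx.1.le, hx.2⟩
              _ = M * ‖f x - g x‖ := mul_comm _ _
      _ = M * ∫ x in Set.Ioc c L, ‖f₀ x - g x‖ := integral_const_mul M _
      _ ≤ M * ∫ x, ‖f₀ x - g x‖ := by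
          apply mul_le_mul_of_nonneg_left _ hM0.le
          exact setIntegral_le_integral (hf₀.sub g_int).norm
            (ae_of_all _ fun x => norm_nonneg _)
      _ ≤ M * (δ / (4 * M)) := mul_le_mul_of_nonneg_left hg_close hM0.le
      _ = δ / 4 := by field_simp
  -- Term 2
  have hgP : ∀ x ∈ Set.Icc (0:ℝ) L, ‖g x - P x‖ ≤ 2 * ε₂ := by
    intro x hx
    calc ‖g x - P x‖ ≤ |(g x - P x).re| + |(g x - P x).im| :=
          Complex.norm_le_abs_re_add_abs_im _
      _ ≤ 2 * ε₂ := by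
          have hre : (g x - P x).re = (g x).re - p.eval x := by
            rw [hPdef]; simp
          have him : (g x - P x).im = (g x).im - q.eval x := by
            rw [hPdef]; simp
          have h1 := hp x hx
          have h2 := hq x hx
          rw [hre, him, abs_sub_comm ((g x).re) (p.eval x),
            abs_sub_comm ((g x).im) (q.eval x)]
          linarith
  have T2 : ‖∫ ξ in c..L, (g ξ - P ξ) * e ξ‖ ≤ δ / 4 := by
    have hb : ∀ x ∈ Set.uIoc c L, ‖(g x - P x) * e x‖ ≤ 2 * ε₂ * M := by
      intro x hx
      rw [Set.uIoc_of_le hcL] at hx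
      rw [norm_mul]
      apply mul_le_mul (hgP x ⟨by linarith [hx.1], hx.2⟩)
        (hebound x ⟨hx.1.le, hx.2⟩) (norm_nonneg _) (by positivity)
    calc ‖∫ ξ in c..L, (g ξ - P ξ) * e ξ‖ ≤ 2 * ε₂ * M * |L - c| :=
          intervalIntegral.norm_integral_le_of_norm_le_const hb
      _ ≤ 2 * ε₂ * M * L := by
          apply mul_le_mul_of_nonneg_left _ (by positivity)
          rw [abs_of_nonneg (by linarith)]; linarith
      _ ≤ δ / 4 := by
          have key : ε₂ * (8 * M * (L + 1)) = δ := by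
            rw [hε₂def]; field_simp
          nlinarith [mul_pos hε₂0 hM0]
  -- Term 3 : integration by parts
  have hv : ∀ x : ℝ, HasDerivAt (fun y => -l⁻¹ * e y) (e x) x := by
    intro x
    have h1 : HasDerivAt (fun y : ℝ => Complex.ofReal (y - s)) 1 x := by
      simpa using ((hasDerivAt_id x).sub_const s).ofReal_comp
    have h2 : HasDerivAt (fun y : ℝ => -(l * Complex.ofReal (y - s))) (-l) x := by
      have := ((h1.const_mul l)).neg; simp only [mul_one] at this; exact this
    have h3 : HasDerivAt e (e x * -l) x := h2.cexp
    have h4 := h3.const_mul (-l⁻¹)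
    rw [show -l⁻¹ * (e x * -l) = e x by linear_combination (e x) * (inv_mul_cancel₀ hl0)] at h4
    exact h4
  have parts : (∫ ξ in c..L, P ξ * e ξ)
      = P L * (-l⁻¹ * e L) - P c * (-l⁻¹ * e c) - ∫ x in c..L, P' x * (-l⁻¹ * e x) :=
    intervalIntegral.integral_mul_deriv_eq_deriv_mul
      (fun x _ => hPderiv x) (fun x _ => hv x)
      (hP'cont.intervalIntegrable c L) (hecont.intervalIntegrable c L)
  have hinv : ‖(-l⁻¹ : ℂ)‖ = ‖l‖⁻¹ := by
    rw [norm_neg, norm_inv]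
  have T3 : ‖∫ ξ in c..L, P ξ * e ξ‖ ≤ M * (2 * B + B' * L) / ‖l‖ := by
    rw [parts]
    have hbd : ∀ x ∈ Set.Icc c L, ‖P x * (-l⁻¹ * e x)‖ ≤ B * (‖l‖⁻¹ * M) := by
      intro x hx
      rw [norm_mul, norm_mul, hinv]
      apply mul_le_mul (hB x ⟨by linarith [hx.1], hx.2⟩)
        (mul_le_mul_of_nonneg_left (hebound x hx) (by positivity))
        (by positivity) hB0
    have hint : ‖∫ x in c..L, P' x * (-l⁻¹ * e x)‖ ≤ B' * (‖l‖⁻¹ * M) * L := by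
      have hb : ∀ x ∈ Set.uIoc c L, ‖P' x * (-l⁻¹ * e x)‖ ≤ B' * (‖l‖⁻¹ * M) := by
        intro x hx
        rw [Set.uIoc_of_le hcL] at hx
        rw [norm_mul, norm_mul, hinv]
        apply mul_le_mul (hB' x ⟨by linarith [hx.1], hx.2⟩)
          (mul_le_mul_of_nonneg_left (hebound x ⟨hx.1.le, hx.2⟩) (by positivity))
          (by positivity) hB'0
      calc ‖∫ x in c..L, P' x * (-l⁻¹ * e x)‖ ≤ B' * (‖l‖⁻¹ * M) * |L - c| :=
            intervalIntegral.norm_integral_le_of_norm_le_const hb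
        _ ≤ B' * (‖l‖⁻¹ * M) * L := by
            apply mul_le_mul_of_nonneg_left _ (by positivity)
            rw [abs_of_nonneg (by linarith)]; linarith
    have hL' : ‖P L * (-l⁻¹ * e L)‖ ≤ B * (‖l‖⁻¹ * M) :=
      hbd L ⟨hcL, le_rfl⟩
    have hc' : ‖P c * (-l⁻¹ * e c)‖ ≤ B * (‖l‖⁻¹ * M) :=
      hbd c ⟨le_rfl, hcL⟩
    calc ‖P L * (-l⁻¹ * e L) - P c * (-l⁻¹ * e c) - ∫ x in c..L, P' x * (-l⁻¹ * e x)‖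
        ≤ ‖P L * (-l⁻¹ * e L) - P c * (-l⁻¹ * e c)‖ + ‖∫ x in c..L, P' x * (-l⁻¹ * e x)‖ :=
          norm_sub_le _ _
      _ ≤ (‖P L * (-l⁻¹ * e L)‖ + ‖P c * (-l⁻¹ * e c)‖) + ‖∫ x in c..L, P' x * (-l⁻¹ * e x)‖ :=
          add_le_add_left (norm_sub_le _ _) _
      _ ≤ (B * (‖l‖⁻¹ * M) + B * (‖l‖⁻¹ * M))
            + B' * (‖l‖⁻¹ * M) * L := by
          exact add_le_add (add_le_add hL' hc') hint
      _ = M * (2 * B + B' * L) / ‖l‖ := by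
          field_simp
          ring
  have T3' : ‖∫ ξ in c..L, P ξ * e ξ‖ < δ / 2 := by
    apply lt_of_le_of_lt T3
    rw [div_lt_iff₀ habs0]
    have h2 : 4 * M * (2 * B + B' * L) / δ < ‖l‖ :=
      lt_of_le_of_lt (le_max_right _ _) hlabs
    rw [div_lt_iff₀ hδ] at h2
    have hC : (0:ℝ) ≤ 2 * B + B' * L := by positivity
    have hMC : (0:ℝ) ≤ M * (2 * B + B' * L) := mul_nonneg hM0.le hC
    nlinarith [mul_pos habs0 hδ]
  -- conclude
  calc ‖∫ ξ in c..L, f ξ * e ξ‖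
      ≤ ‖∫ ξ in c..L, (f ξ - g ξ) * e ξ‖ + (‖∫ ξ in c..L, (g ξ - P ξ) * e ξ‖
        + ‖∫ ξ in c..L, P ξ * e ξ‖) := by
        rw [hsplit]; exact le_trans (norm_add_le _ _) (by gcongr; exact norm_add_le _ _)
    _ < δ / 4 + (δ / 4 + δ / 2) :=
        add_lt_add_of_le_of_lt T1 (add_lt_add_of_le_of_lt T2 T3')
    _ = δ := by ring
end
end
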